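/- Implicit update velocity bound without time-step restriction: suppose vⁿ⁺¹ satisfies vⁿ⁺¹ = vⁿ + (Δt/m_p)G(u₀,u₁,vⁿ⁺¹) and vⁿ⁺¹ ≤ min(u₀,u₁). If G(v,v,v) = 0 and 0 ≤ ∂ᵢG ≤ 2L for i = 1,2, and u₀,u₁ ≤ v̄, vⁿ ≤ v̄, then vⁿ⁺¹ ≤ (vⁿ + 2L(Δt/m_p)(u₀+u₁)) / (1 + 4LΔt/m_p) ≤ v̄, with no constraint on Δt beyond positivity. -/

import Mathlib

/-- Implicit update: velocity bound without time-step restriction. -/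
theorem implicit_velocity_bound
    (G dG1 dG2 : ℝ → ℝ → ℝ → ℝ) (L mp dt : ℝ)
    (hL : 0 < L) (hmp : 0 < mp) (hdt : 0 < dt)
    (hG0 : ∀ v : ℝ, G v v v = 0)
    (hd1 : ∀ a b v : ℝ, HasDerivAt (fun x => G x b v) (dG1 a b v) a)
    (hd2 : ∀ a b v : ℝ, HasDerivAt (fun y => G a y v) (dG2 a b v) b)
    (hb1 : ∀ a b v : ℝ, 0 ≤ dG1 a b v ∧ dG1 a b v ≤ 2 * L)
    (hb2 : ∀ a b v : ℝ, 0 ≤ dG2 a b v ∧ dG2 a b v ≤ 2 * L)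
    (vn vnp1 u0 u1 vbar : ℝ)
    (himp : vnp1 = vn + dt / mp * G u0 u1 vnp1)
    (hle : vnp1 ≤ min u0 u1)
    (hu0 : u0 ≤ vbar) (hu1 : u1 ≤ vbar) (hvn : vn ≤ vbar) :
    vnp1 ≤ (vn + 2 * L * (dt / mp) * (u0 + u1)) / (1 + 4 * L * dt / mp) ∧
    (vn + 2 * L * (dt / mp) * (u0 + u1)) / (1 + 4 * L * dt / mp) ≤ vbar := by
  have hle0 : vnp1 ≤ u0 := le_trans hle (min_le_left _ _)
  have hle1 : vnp1 ≤ u1 := le_trans hle (min_le_right _ _)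
  -- monotone in first slot
  have mono1 : Monotone (fun x => 2 * L * x - G x u1 vnp1) := by
    apply monotone_of_deriv_nonneg
    · intro x
      exact (((hasDerivAt_id x).const_mul (2 * L)).sub (hd1 x u1 vnp1)).differentiableAt
    · intro x
      have h : HasDerivAt (fun x => 2 * L * x - G x u1 vnp1)
          (2 * L - dG1 x u1 vnp1) x := by
        have := ((hasDerivAt_id x).const_mul (2 * L)).sub (hd1 x u1 vnp1)
        simp only [mul_one] at this
        exact this
      rw [h.deriv]
      have := (hb1 x u1 vnp1).2
      linarith
  have mono2 : Monotone (fun y => 2 * L * y - G vnp1 y vnp1) := by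
    apply monotone_of_deriv_nonneg
    · intro y
      exact (((hasDerivAt_id y).const_mul (2 * L)).sub (hd2 vnp1 y vnp1)).differentiableAt
    · intro y
      have h : HasDerivAt (fun y => 2 * L * y - G vnp1 y vnp1)
          (2 * L - dG2 vnp1 y vnp1) y := by
        have := ((hasDerivAt_id y).const_mul (2 * L)).sub (hd2 vnp1 y vnp1)
        simp only [mul_one] at this
        exact this
      rw [h.deriv]
      have := (hb2 vnp1 y vnp1).2
      linarith
  have k1 : 2 * L * vnp1 - G vnp1 u1 vnp1 ≤ 2 * L * u0 - G u0 u1 vnp1 := mono1 hle0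
  have k2 : 2 * L * vnp1 - G vnp1 vnp1 vnp1 ≤ 2 * L * u1 - G vnp1 u1 vnp1 := mono2 hle1
  have hGz := hG0 vnp1
  have hGb : G u0 u1 vnp1 ≤ 2 * L * (u0 - vnp1) + 2 * L * (u1 - vnp1) := by
    nlinarith
  have hdm : 0 < dt / mp := div_pos hdt hmp
  have hv : vnp1 ≤ vn + dt / mp * (2 * L * (u0 - vnp1) + 2 * L * (u1 - vnp1)) := by
    have := mul_le_mul_of_nonneg_left hGb hdm.le
    linarith [himp]
  have hv' : vnp1 + 4 * L * (dt / mp) * vnp1 ≤ vn + 2 * L * (dt / mp) * (u0 + u1) := by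
    nlinarith [hv]
  have hD : 0 < 1 + 4 * L * dt / mp := by positivity
  have hE : 1 + 4 * L * dt / mp = 1 + 4 * L * (dt / mp) := by ring
  rw [hE]
  have hD' : 0 < 1 + 4 * L * (dt / mp) := by positivity
  constructor
  · rw [le_div_iff₀ hD']
    nlinarith [hv']
  · rw [div_le_iff₀ hD']
    nlinarith [mul_le_mul_of_nonneg_left (add_le_add hu0 hu1)
      (by positivity : (0:ℝ) ≤ 2 * L * (dt / mp))]
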